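/- Let C be a binary linear code of length n, dimension k ≥ 1, and minimum distance d, and define t(C) to be the minimum, over all generator matrices G of C, of the maximum Hamming weight of a row of G. Then d ≤ t(C) ≤ d + s, where s = n − Σ_{j=0}^{k−1} ⌈d/2^j⌉. -/

import Mathlib

open Finset

section helpers
variable {ι : Type} [Fintype ι] [DecidableEq ι] (c : ι → ZMod 2)

noncomputable abbrev prj : (ι → ZMod 2) →ₗ[ZMod 2] ({i : ι // c i = 0} → ZMod 2) :=
  LinearMap.funLeft (ZMod 2) (ZMod 2) Subtype.val

def wS (y : ι → ZMod 2) : ℕ := (Finset.univ.filter fun i => c i ≠ 0 ∧ y i ≠ 0).card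

omit [Fintype ι] [DecidableEq ι] in
lemma prj_c : prj c c = 0 := funext fun i => i.prop

lemma hdec (y : ι → ZMod 2) : hammingNorm y = wS c y + hammingNorm (prj c y) := by
  have h1 : hammingNorm (prj c y) = (Finset.univ.filter fun i : ι => c i = 0 ∧ y i ≠ 0).card := by
    have e1 : hammingNorm (prj c y) = Fintype.card {i : {i : ι // c i = 0} // y i.val ≠ 0} := by
      rw [Fintype.card_subtype]; rfl
    rw [e1, Fintype.card_congr
      (Equiv.subtypeSubtypeEquivSubtypeInter (fun i : ι => c i = 0) (fun i => y i ≠ 0)),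
      Fintype.card_subtype]
  rw [h1, wS]
  show (Finset.univ.filter fun i => y i ≠ 0).card = _
  rw [← Finset.card_union_of_disjoint]
  · congr 1
    ext i
    simp only [mem_filter, mem_union, mem_univ, true_and]
    tauto
  · rw [Finset.disjoint_filter]
    tauto

lemma hwS (y : ι → ZMod 2) : wS c y + wS c (y + c) = hammingNorm c := by
  have pt : ∀ a b : ZMod 2, (a ≠ 0 ∧ b + a ≠ 0 ↔ a ≠ 0 ∧ ¬(b ≠ 0)) := by decide
  rw [wS, wS]
  show _ + (Finset.univ.filter fun i => c i ≠ 0 ∧ (y + c) i ≠ 0).card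
      = (Finset.univ.filter fun i => c i ≠ 0).card
  rw [← Finset.card_union_of_disjoint]
  · congr 1
    ext i
    simp only [mem_filter, mem_union, mem_univ, true_and, Pi.add_apply]
    have := pt (c i) (y i)
    tauto
  · rw [Finset.disjoint_filter]
    intro i _ h1
    have := pt (c i) (y i)
    simp only [Pi.add_apply]
    tauto

omit [DecidableEq ι] in
lemma hammingNorm_filter (y : ι → ZMod 2) :
    hammingNorm y = (Finset.univ.filter fun i => y i ≠ 0).card := rfl

lemma card_split : Fintype.card ι = hammingNorm c + Fintype.card {i : ι // c i = 0} := by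
  have h := Finset.card_filter_add_card_filter_not (s := Finset.univ)
    (p := fun i => c i ≠ 0)
  have e1 : (Finset.univ.filter fun i => ¬ (c i ≠ 0)) = Finset.univ.filter fun i => c i = 0 := by
    simp only [ne_eq, not_not]
  rw [e1] at h
  rw [Fintype.card_subtype, hammingNorm_filter, ← Finset.card_univ]
  omega

end helpers

private lemma ceil_div_aux {d d' M : ℕ} (hM : 0 < M) (h : d ≤ 2 * d') :
    (d + 2 * M - 1) / (2 * M) ≤ (d' + M - 1) / M := by
  have h2 := Nat.div_add_mod (d' + M - 1) M
  have h3 := Nat.mod_lt (d' + M - 1) hM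
  rw [Nat.div_le_iff_le_mul_add_pred (by omega)]
  have h4 : 2 * M * ((d' + M - 1) / M) = 2 * (M * ((d' + M - 1) / M)) := by ring
  omega

private lemma ceil_div_lemma {d d' : ℕ} (j : ℕ) (h : d ≤ 2 * d') :
    (d + 2 ^ (j+1) - 1) / 2 ^ (j+1) ≤ (d' + 2 ^ j - 1) / 2 ^ j := by
  have e : (2:ℕ) ^ (j+1) = 2 * 2 ^ j := by ring
  rw [e]
  exact ceil_div_aux (Nat.pow_pos (by norm_num)) h

private lemma key (k : ℕ) : ∀ (ι : Type) [Fintype ι] [DecidableEq ι]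
    (C : Submodule (ZMod 2) (ι → ZMod 2)) (d : ℕ),
    Module.finrank (ZMod 2) C = k → 1 ≤ k →
    IsLeast {w : ℕ | ∃ x ∈ C, x ≠ 0 ∧ hammingNorm x = w} d →
    ∃ G : Fin k → ι → ZMod 2, LinearIndependent (ZMod 2) G ∧
      Submodule.span (ZMod 2) (Set.range G) = C ∧
      ∀ i, hammingNorm (G i) + ∑ j ∈ Finset.range (k-1), (d + 2^(j+1) - 1)/2^(j+1)
        ≤ Fintype.card ι := by
  induction k with
  | zero => omega
  | succ k ih =>
    intro ι _ _ C d hk _ hd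
    obtain ⟨⟨c, hcC, hc0, hcw⟩, hdlb⟩ := hd
    -- base case k = 0
    rcases Nat.eq_zero_or_pos k with hk0 | hkpos
    · subst hk0
      refine ⟨fun _ => c, ?_, ?_, ?_⟩
      · refine Fintype.linearIndependent_iff.2 fun g hg i => ?_
        rw [Fin.sum_univ_one] at hg
        have h := smul_eq_zero.mp hg
        have h0 : g 0 = 0 := by tauto
        exact Fin.cases h0 (fun i => i.elim0) i
      · have hr : Set.range (fun _ : Fin 1 => c) = {c} := Set.range_const
        rw [hr]
        refine Submodule.eq_of_le_of_finrank_le ?_ ?_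
        · rw [Submodule.span_le, Set.singleton_subset_iff]; exact hcC
        · rw [hk, finrank_span_singleton hc0]
      · intro i
        simpa using hammingNorm_le_card_fintype
    -- inductive step
    have hd1 : 1 ≤ d := by
      rcases Nat.eq_zero_or_pos d with h | h
      · exact absurd (hammingNorm_eq_zero.mp (hcw.trans h)) hc0
      · exact h
    have hπc : prj c c = 0 := prj_c c
    -- kernel characterization
    have hker : ∀ x ∈ C, prj c x = 0 → x = 0 ∨ x = c := by
      intro x hxC hx0
      by_cases hx : x = 0
      · exact Or.inl hx
      right
      have hwx : d ≤ hammingNorm x := hdlb ⟨x, hxC, hx, rfl⟩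
      have hdx : hammingNorm x = wS c x + hammingNorm (prj c x) := hdec c x
      rw [hx0, hammingNorm_zero] at hdx
      -- wS c x ≤ d with equality forcing support equality
      have hsub : (Finset.univ.filter fun i => c i ≠ 0 ∧ x i ≠ 0)
          ⊆ (Finset.univ.filter fun i => c i ≠ 0) := by
        intro i hi
        simp only [mem_filter] at hi ⊢
        tauto
      have hcard : wS c x ≤ hammingNorm c := by
        rw [wS, hammingNorm_filter]
        exact Finset.card_le_card hsub
      have heq : (Finset.univ.filter fun i => c i ≠ 0 ∧ x i ≠ 0)
          = (Finset.univ.filter fun i => c i ≠ 0) := by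
        apply Finset.eq_of_subset_of_card_le hsub
        rw [← hammingNorm_filter]
        show hammingNorm c ≤ wS c x
        omega
      -- x i = 0 when c i = 0; x i ≠ 0 when c i ≠ 0; conclude x = c
      have hzm : ∀ a : ZMod 2, a ≠ 0 → a = 1 := by decide
      funext i
      by_cases hci : c i = 0
      · have : x i = 0 := by
          have := congrFun hx0 (⟨i, hci⟩ : {i : ι // c i = 0})
          exact this
        rw [this, hci]
      · have hi : i ∈ Finset.univ.filter fun i => c i ≠ 0 := by
          simp [hci]
        rw [← heq, mem_filter] at hi
        rw [hzm _ hi.2.2, hzm _ hci]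
    -- rank of B
    set f : C →ₗ[ZMod 2] ({i : ι // c i = 0} → ZMod 2) := prj c ∘ₗ C.subtype with hf
    have hrange : LinearMap.range f = C.map (prj c) := by
      rw [hf, LinearMap.range_comp, Submodule.range_subtype]
    have hkerf : LinearMap.ker f = Submodule.span (ZMod 2) {(⟨c, hcC⟩ : C)} := by
      apply le_antisymm
      · intro x hx
        have hx' : prj c x.val = 0 := LinearMap.mem_ker.mp hx
        rcases hker x.val x.prop hx' with h | h
        · have hx0 : x = 0 := Subtype.ext h
          rw [hx0]; exact Submodule.zero_mem _
        · have hx0 : x = ⟨c, hcC⟩ := Subtype.ext h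
          rw [hx0]; exact Submodule.subset_span rfl
      · rw [Submodule.span_le, Set.singleton_subset_iff]
        refine LinearMap.mem_ker.mpr ?_
        exact hπc
    have hc0' : (⟨c, hcC⟩ : C) ≠ 0 := fun h => hc0 (congrArg Subtype.val h)
    have hBrank : Module.finrank (ZMod 2) (C.map (prj c)) = k := by
      have h := LinearMap.finrank_range_add_finrank_ker f
      rw [hrange, hkerf, finrank_span_singleton hc0', hk] at h
      omega
    -- minimum distance of B
    have hBne : ∃ x ∈ C.map (prj c), x ≠ 0 := by
      refine Submodule.exists_mem_ne_zero_of_ne_bot fun h => ?_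
      rw [h, finrank_bot] at hBrank
      omega
    set W := {w : ℕ | ∃ x ∈ C.map (prj c), x ≠ 0 ∧ hammingNorm x = w} with hW
    have hWne : W.Nonempty := by
      obtain ⟨x, hx, h0⟩ := hBne
      exact ⟨_, x, hx, h0, rfl⟩
    set d' := sInf W with hd'def
    have hd' : IsLeast W d' := ⟨Nat.sInf_mem hWne, fun w hw => Nat.sInf_le hw⟩
    have hge : ∀ x ∈ C.map (prj c), x ≠ 0 → d ≤ 2 * hammingNorm x := by
      intro x hx h0
      obtain ⟨yy, hyyC, hyx⟩ := Submodule.mem_map.mp hx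
      have hy0 : yy ≠ 0 := by rintro rfl; rw [map_zero] at hyx; exact h0 hyx.symm
      have hπyc : prj c (yy + c) = x := by rw [map_add, hπc, add_zero, hyx]
      have hyc0 : yy + c ≠ 0 := by
        intro h
        rw [h, map_zero] at hπyc
        exact h0 hπyc.symm
      have h1 : d ≤ hammingNorm yy := hdlb ⟨yy, hyyC, hy0, rfl⟩
      have h2 : d ≤ hammingNorm (yy + c) := hdlb ⟨yy + c, C.add_mem hyyC hcC, hyc0, rfl⟩
      have h3 := hdec c yy
      have h4 := hdec c (yy + c)
      have h5 := hwS c yy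
      rw [hyx] at h3
      rw [hπyc] at h4
      rw [hcw] at h5
      omega
    have hd2d' : d ≤ 2 * d' := by
      obtain ⟨x, hx, h0, hwx⟩ := hd'.1
      rw [← hwx]
      exact hge x hx h0
    -- apply the induction hypothesis
    obtain ⟨b, hbli, hbsp, hbbd⟩ := ih {i : ι // c i = 0} (C.map (prj c)) d' hBrank hkpos hd'
    -- lifts
    have hex : ∀ i, ∃ z, z ∈ C ∧ prj c z = b i := by
      intro i
      have hbi : b i ∈ C.map (prj c) := hbsp ▸ Submodule.subset_span (Set.mem_range_self i)
      obtain ⟨z, hz, hz2⟩ := Submodule.mem_map.mp hbi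
      exact ⟨z, hz, hz2⟩
    choose x hxC hxπ using hex
    set y : Fin k → ι → ZMod 2 := fun i => if 2 * wS c (x i) ≤ d then x i else x i + c with hy
    have hyC : ∀ i, y i ∈ C := by
      intro i
      rw [hy]; dsimp only; split
      · exact hxC i
      · exact C.add_mem (hxC i) hcC
    have hyπ : ∀ i, prj c (y i) = b i := by
      intro i
      rw [hy]; dsimp only; split
      · exact hxπ i
      · rw [map_add, hπc, add_zero]; exact hxπ i
    have hyS : ∀ i, 2 * wS c (y i) ≤ d := by
      intro i
      rw [hy]; dsimp only; split
      · assumption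
      · have h5 := hwS c (x i)
        rw [hcw] at h5
        omega
    set G : Fin (k+1) → ι → ZMod 2 := Fin.cons c y with hG
    have hGli : LinearIndependent (ZMod 2) G := by
      refine Fintype.linearIndependent_iff.2 fun g hg => ?_
      have h1 : (∑ i : Fin k, g i.succ • b i) = 0 := by
        have h2 : prj c (∑ i, g i • G i) = 0 := by rw [hg, map_zero]
        rw [map_sum] at h2
        simp only [map_smul] at h2
        rw [Fin.sum_univ_succ] at h2
        simp only [hG, Fin.cons_zero, Fin.cons_succ] at h2
        rw [hπc, smul_zero, zero_add] at h2
        simp only [hyπ] at h2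
        exact h2
      have h3 := Fintype.linearIndependent_iff.1 hbli _ h1
      have h4 : g 0 = 0 := by
        rw [Fin.sum_univ_succ] at hg
        simp only [hG, Fin.cons_zero, Fin.cons_succ] at hg
        have hz : (∑ i : Fin k, g i.succ • y i) = 0 := by
          apply Finset.sum_eq_zero
          intro i _
          rw [h3 i, zero_smul]
        rw [hz, add_zero] at hg
        exact (smul_eq_zero.mp hg).resolve_right hc0
      intro i
      exact Fin.cases h4 h3 i
    have hGspan : Submodule.span (ZMod 2) (Set.range G) = C := by
      refine Submodule.eq_of_le_of_finrank_le ?_ ?_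
      · rw [Submodule.span_le, Set.range_subset_iff]
        intro i
        refine Fin.cases ?_ ?_ i
        · simpa [hG] using hcC
        · intro j; simpa [hG] using hyC j
      · rw [hk, finrank_span_eq_card hGli, Fintype.card_fin]
    refine ⟨G, hGli, hGspan, ?_⟩
    have hbne : ∀ i, b i ≠ 0 := fun i => hbli.ne_zero i
    have hbm : ∀ i, b i ∈ C.map (prj c) := fun i => hbsp ▸ Submodule.subset_span (Set.mem_range_self i)
    have hd'le : ∀ i, d' ≤ hammingNorm (b i) := fun i => hd'.2 ⟨b i, hbm i, hbne i, rfl⟩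
    have hcard := card_split c
    rw [hcw] at hcard
    have hksucc : k - 1 + 1 = k := by omega
    set Sd' := ∑ j ∈ Finset.range (k-1), (d' + 2^(j+1) - 1)/2^(j+1) with hSd'
    have hsum1 : ∑ j ∈ Finset.range k, (d + 2^(j+1) - 1)/2^(j+1)
        = (∑ j ∈ Finset.range (k-1), (d + 2^(j+1+1) - 1)/2^(j+1+1)) + (d + 2^(0+1) - 1)/2^(0+1) := by
      conv_lhs => rw [← hksucc, Finset.sum_range_succ']
    have hsum2 : ∑ j ∈ Finset.range (k-1), (d + 2^(j+1+1) - 1)/2^(j+1+1) ≤ Sd' := by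
      apply Finset.sum_le_sum
      intro j _
      exact ceil_div_lemma (j+1) hd2d'
    have hsum3 : ∑ j ∈ Finset.range k, (d + 2^(j+1) - 1)/2^(j+1) ≤ d' + Sd' := by
      calc ∑ j ∈ Finset.range k, (d + 2^(j+1) - 1)/2^(j+1)
          ≤ ∑ j ∈ Finset.range k, (d' + 2^j - 1)/2^j :=
            Finset.sum_le_sum fun j _ => ceil_div_lemma j hd2d'
        _ = (∑ j ∈ Finset.range (k-1), (d' + 2^(j+1) - 1)/2^(j+1)) + (d' + 2^0 - 1)/2^0 := by
            conv_lhs => rw [← hksucc, Finset.sum_range_succ']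
        _ = d' + Sd' := by
            rw [← hSd']
            simp
            omega
    have hgries : d' + Sd' ≤ Fintype.card {i : ι // c i = 0} := by
      have h := hbbd ⟨0, hkpos⟩
      have h2 := hd'le ⟨0, hkpos⟩
      omega
    have hk1 : k + 1 - 1 = k := rfl
    intro i
    refine Fin.cases ?_ ?_ i
    · simp only [hG, Fin.cons_zero, hk1]
      rw [hcw]
      omega
    · intro i
      simp only [hG, Fin.cons_succ, hk1]
      have h6 := hdec c (y i)
      rw [hyπ i] at h6
      have h7 := hbbd i
      have h8 := hyS i
      have h10 : (d + 2^(0+1) - 1)/2^(0+1) = (d+1)/2 := by norm_num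
      omega


/-- for a binary linear code `C` of length `n`, dimension `k ≥ 1` and minimum
distance `d`, the quantity `t(C)` — the minimum over generator matrices of `C` of the
maximum row weight — satisfies `d ≤ t(C) ≤ d + s`, where
`s = n − Σ_{j<k} ⌈d/2^j⌉`. -/
theorem stmt_3 {n k d : ℕ} (C : Submodule (ZMod 2) (Fin n → ZMod 2))
    (hk : Module.finrank (ZMod 2) C = k) (hk1 : 1 ≤ k)
    (hd : IsLeast {w : ℕ | ∃ x ∈ C, x ≠ 0 ∧ hammingNorm x = w} d) :
    d ≤ sInf {t : ℕ | ∃ G : Fin k → (Fin n → ZMod 2),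
          LinearIndependent (ZMod 2) G ∧ Submodule.span (ZMod 2) (Set.range G) = C ∧
          t = Finset.univ.sup fun i => hammingNorm (G i)} ∧
    sInf {t : ℕ | ∃ G : Fin k → (Fin n → ZMod 2),
          LinearIndependent (ZMod 2) G ∧ Submodule.span (ZMod 2) (Set.range G) = C ∧
          t = Finset.univ.sup fun i => hammingNorm (G i)}
      ≤ d + (n - ∑ j ∈ Finset.range k, (d + 2 ^ j - 1) / 2 ^ j) := by
  obtain ⟨G0, hli0, hsp0, hbd0⟩ := key k (Fin n) C d hk hk1 hd
  have hmem : (Finset.univ.sup fun i => hammingNorm (G0 i)) ∈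
      {t : ℕ | ∃ G : Fin k → (Fin n → ZMod 2),
        LinearIndependent (ZMod 2) G ∧ Submodule.span (ZMod 2) (Set.range G) = C ∧
        t = Finset.univ.sup fun i => hammingNorm (G i)} := ⟨G0, hli0, hsp0, rfl⟩
  constructor
  · refine le_csInf ⟨_, hmem⟩ ?_
    rintro t ⟨G, hli, hsp, rfl⟩
    let i0 : Fin k := ⟨0, hk1⟩
    have hG0C : G i0 ∈ C := hsp ▸ Submodule.subset_span (Set.mem_range_self i0)
    have hne : G i0 ≠ 0 := hli.ne_zero i0
    have hdl : d ≤ hammingNorm (G i0) := hd.2 ⟨G i0, hG0C, hne, rfl⟩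
    exact le_trans hdl (Finset.le_sup (f := fun i => hammingNorm (G i)) (Finset.mem_univ i0))
  · have hksucc : k - 1 + 1 = k := by omega
    have hsum : ∑ j ∈ Finset.range k, (d + 2^j - 1)/2^j
        = (∑ j ∈ Finset.range (k-1), (d + 2^(j+1) - 1)/2^(j+1)) + (d + 2^0 - 1)/2^0 := by
      conv_lhs => rw [← hksucc, Finset.sum_range_succ']
    have h0 : (d + 2^0 - 1)/2^0 = d := by simp
    have hcard : Fintype.card (Fin n) = n := Fintype.card_fin n
    have hb0 := hbd0 ⟨0, hk1⟩
    have hG0C : G0 ⟨0, hk1⟩ ∈ C := hsp0 ▸ Submodule.subset_span (Set.mem_range_self _)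
    have hdl : d ≤ hammingNorm (G0 ⟨0, hk1⟩) := hd.2 ⟨G0 ⟨0, hk1⟩, hG0C, hli0.ne_zero _, rfl⟩
    have hsup : (Finset.univ.sup fun i => hammingNorm (G0 i))
        ≤ n - ∑ j ∈ Finset.range (k-1), (d + 2^(j+1) - 1)/2^(j+1) := by
      apply Finset.sup_le
      intro i _
      have := hbd0 i
      omega
    have hle := Nat.sInf_le hmem
    refine le_trans hle (le_trans hsup ?_)
    clear hle hmem
    omega
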